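/- arXiv:math/0702650 — 2 statements merged into one kernel-verified Lean document; each statement's English description precedes it below -/
import Mathlib

section
/- Let θ_j = j^{-α} with α > 1. Then there is a constant D > 0 such that for all j ≥ 1, Σ_{k≠j} (θ_j - θ_k)^{-2} θ_j θ_k ≤ D j². -/
open Real NNReal

lemma sum_shift_summable {p : ℝ} (hp : 1 < p) :
    Summable (fun n : ℕ => ((n : ℝ) + 1) ^ (-p)) := by
  have h := Real.summable_nat_rpow.mpr (show -p < -1 by linarith)
  have h2 := (_root_.summable_nat_add_iff 1).mpr h
  refine h2.congr fun n => ?_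
  push_cast
  ring_nf

lemma subadd_rpow {x y p : ℝ} (hx : 0 ≤ x) (hy : 0 ≤ y) (hp : 0 ≤ p) (hp1 : p ≤ 1) :
    (x + y) ^ p ≤ x ^ p + y ^ p := by
  lift x to ℝ≥0 using hx with x
  lift y to ℝ≥0 using hy with y
  have := NNReal.rpow_add_le_add_rpow x y hp hp1
  exact_mod_cast this

lemma lemA {α x y : ℝ} (hα : 1 ≤ α) (hy : 0 < y) (hxy : y ≤ x) :
    (x - y) * x ^ (α - 1) ≤ x ^ α - y ^ α := by
  have hx : 0 < x := lt_of_lt_of_le hy hxy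
  have h1 : (y / x) ^ α ≤ (y / x) ^ (1 : ℝ) :=
    Real.rpow_le_rpow_of_exponent_ge (div_pos hy hx) (div_le_one_of_le₀ hxy hx.le) hα
  rw [Real.rpow_one, Real.div_rpow hy.le hx.le, div_le_div_iff₀ (rpow_pos_of_pos hx α) hx] at h1
  have h3 : x ^ (α - 1) * x = x ^ α := by
    rw [← Real.rpow_add_one hx.ne' (α - 1)]; ring_nf
  nlinarith [rpow_pos_of_pos hy α, rpow_pos_of_pos hx (α - 1), hx]

-- squared version of lemA
lemma lemA2 {α x y : ℝ} (hα : 1 ≤ α) (hy : 0 < y) (hxy : y ≤ x) :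
    (x - y) ^ (2:ℝ) * x ^ (2*α - 2) ≤ (x ^ α - y ^ α) ^ 2 := by
  have hx : 0 < x := lt_of_lt_of_le hy hxy
  have h := lemA hα hy hxy
  have h0 : 0 ≤ (x - y) * x ^ (α - 1) := mul_nonneg (by linarith) (rpow_nonneg hx.le _)
  have e1 : (x - y) ^ (2:ℝ) * x ^ (2*α - 2) = ((x - y) * x ^ (α - 1)) ^ 2 := by
    rw [Real.rpow_two, mul_pow, pow_two (x ^ (α - 1)), ← Real.rpow_add hx]
    congr 1
    ring
  rw [e1]
  nlinarith [h, h0]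

lemma core {α : ℝ} (hα : 1 < α) {a b : ℝ} (ha : 1 ≤ a) (hb : 1 ≤ b) (hab : a ≠ b)
    (hd : 1 ≤ |b - a|) :
    (a ^ (-α) - b ^ (-α)) ^ (-2 : ℤ) * a ^ (-α) * b ^ (-α)
      ≤ a ^ 2 * (|b - a| ^ (-(2:ℝ)) + |b - a| ^ (-α)) := by
  have ha0 : (0:ℝ) < a := lt_of_lt_of_le one_pos ha
  have hb0 : (0:ℝ) < b := lt_of_lt_of_le one_pos hb
  have hα0 : (0:ℝ) < α := by linarith
  have hApos : (0:ℝ) < a ^ α := rpow_pos_of_pos ha0 α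
  have hBpos : (0:ℝ) < b ^ α := rpow_pos_of_pos hb0 α
  -- rewrite LHS as (a^α * b^α) / (b^α - a^α)^2
  have hABne : a ^ α ≠ b ^ α := by
    rcases lt_or_gt_of_ne hab with h | h
    · exact ne_of_lt (Real.rpow_lt_rpow ha0.le h hα0)
    · exact ne_of_gt (Real.rpow_lt_rpow hb0.le h hα0)
  have hsub : b ^ α - a ^ α ≠ 0 := sub_ne_zero.mpr (Ne.symm hABne)
  have hinv : (a ^ α)⁻¹ - (b ^ α)⁻¹ ≠ 0 := by
    rw [inv_sub_inv hApos.ne' hBpos.ne']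
    exact div_ne_zero hsub (by positivity)
  have hLHS : (a ^ (-α) - b ^ (-α)) ^ (-2 : ℤ) * a ^ (-α) * b ^ (-α)
      = a ^ α * b ^ α / (b ^ α - a ^ α) ^ 2 := by
    rw [Real.rpow_neg ha0.le, Real.rpow_neg hb0.le]
    rw [show ((a ^ α)⁻¹ - (b ^ α)⁻¹) ^ (-2 : ℤ) = (((a ^ α)⁻¹ - (b ^ α)⁻¹) ^ 2)⁻¹ by
      rw [zpow_neg]; norm_cast]
    field_simp
  rw [hLHS]
  have hsq : (0:ℝ) < (b ^ α - a ^ α) ^ 2 := by positivity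
  rw [div_le_iff₀ hsq]
  have ha2 : a ^ (2:ℝ) = a ^ 2 := Real.rpow_two a
  rcases lt_or_gt_of_ne hab with h | h
  -- case a < b : larger base is b
  · have hd0 : (0:ℝ) < b - a := by linarith
    have habs : |b - a| = b - a := abs_of_pos hd0
    rw [habs] at hd ⊢
    have key : (b - a) ^ (2:ℝ) * b ^ (2*α - 2) ≤ (b ^ α - a ^ α) ^ 2 :=
      lemA2 hα.le ha0 h.le
    have main : a ^ α * b ^ α ≤ a ^ (2:ℝ) * (1 + (b - a) ^ (2 - α)) * b ^ (2*α - 2) := by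
      have hbb : b ^ α = b ^ (2 - α) * b ^ (2*α - 2) := by
        rw [← Real.rpow_add hb0]; ring_nf
      have hsuf : a ^ α * b ^ (2 - α) ≤ a ^ (2:ℝ) * (1 + (b - a) ^ (2 - α)) := by
        rcases le_or_gt 2 α with h2 | h2
        · have hba : b ^ (2-α) ≤ a ^ (2-α) :=
            Real.rpow_le_rpow_of_nonpos ha0 h.le (by linarith)
          have e2 : a ^ α * a ^ (2-α) = a ^ (2:ℝ) := by
            rw [← Real.rpow_add ha0]; ring_nf
          have s1 : a ^ α * b ^ (2-α) ≤ a ^ α * a ^ (2-α) :=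
            mul_le_mul_of_nonneg_left hba (rpow_nonneg ha0.le α)
          have s2 : 0 ≤ a ^ (2:ℝ) * (b-a) ^ (2-α) :=
            mul_nonneg (rpow_nonneg ha0.le _) (rpow_nonneg hd0.le _)
          have s3 : a ^ (2:ℝ) * (1 + (b-a) ^ (2-α))
              = a ^ (2:ℝ) + a ^ (2:ℝ) * (b-a) ^ (2-α) := by ring
          linarith
        · have hb2 : b ^ (2-α) ≤ a ^ (2-α) + (b - a) ^ (2-α) := by
            have hba : b = a + (b - a) := by ring
            calc b ^ (2-α) = (a + (b-a)) ^ (2-α) := by rw [← hba]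
            _ ≤ a ^ (2-α) + (b-a) ^ (2-α) :=
              subadd_rpow ha0.le hd0.le (by linarith) (by linarith)
          have haα : a ^ α ≤ a ^ (2:ℝ) := Real.rpow_le_rpow_of_exponent_le ha (by linarith)
          have e2 : a ^ α * a ^ (2-α) = a ^ (2:ℝ) := by
            rw [← Real.rpow_add ha0]; ring_nf
          have s1 : a ^ α * b ^ (2-α) ≤ a ^ α * (a ^ (2-α) + (b-a) ^ (2-α)) :=
            mul_le_mul_of_nonneg_left hb2 (rpow_nonneg ha0.le α)
          have s1' : a ^ α * (a ^ (2-α) + (b-a) ^ (2-α))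
              = a ^ α * a ^ (2-α) + a ^ α * (b-a) ^ (2-α) := by ring
          have s2 : a ^ α * (b-a) ^ (2-α) ≤ a ^ (2:ℝ) * (b-a) ^ (2-α) :=
            mul_le_mul_of_nonneg_right haα (rpow_nonneg hd0.le _)
          have s3 : a ^ (2:ℝ) * (1 + (b-a) ^ (2-α))
              = a ^ (2:ℝ) + a ^ (2:ℝ) * (b-a) ^ (2-α) := by ring
          linarith
      calc a ^ α * b ^ α = (a ^ α * b ^ (2-α)) * b ^ (2*α-2) := by rw [hbb]; ring
      _ ≤ (a ^ (2:ℝ) * (1 + (b-a) ^ (2-α))) * b ^ (2*α-2) :=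
          mul_le_mul_of_nonneg_right hsuf (rpow_nonneg hb0.le _)
      _ = a ^ (2:ℝ) * (1 + (b-a) ^ (2-α)) * b ^ (2*α-2) := by ring
    calc a ^ α * b ^ α ≤ a ^ (2:ℝ) * (1 + (b-a) ^ (2-α)) * b ^ (2*α-2) := main
    _ = (a ^ (2:ℝ) * ((b-a) ^ (-(2:ℝ)) + (b-a) ^ (-α))) * ((b-a) ^ (2:ℝ) * b ^ (2*α-2)) := by
        have f1 : (b-a) ^ (-(2:ℝ)) * (b-a) ^ (2:ℝ) = 1 := by
          rw [← Real.rpow_add hd0]; norm_num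
        have f2 : (b-a) ^ (-α) * (b-a) ^ (2:ℝ) = (b-a) ^ (2-α) := by
          rw [← Real.rpow_add hd0]; ring_nf
        calc a ^ (2:ℝ) * (1 + (b-a) ^ (2-α)) * b ^ (2*α-2)
            = a ^ (2:ℝ) * ((b-a) ^ (-(2:ℝ)) * (b-a) ^ (2:ℝ)
              + (b-a) ^ (-α) * (b-a) ^ (2:ℝ)) * b ^ (2*α-2) := by rw [f1, f2]
        _ = (a ^ (2:ℝ) * ((b-a) ^ (-(2:ℝ)) + (b-a) ^ (-α))) * ((b-a) ^ (2:ℝ) * b ^ (2*α-2)) := by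
            ring
    _ ≤ (a ^ (2:ℝ) * ((b-a) ^ (-(2:ℝ)) + (b-a) ^ (-α))) * (b ^ α - a ^ α) ^ 2 := by
        apply mul_le_mul_of_nonneg_left key
        positivity
    _ = a ^ 2 * ((b-a) ^ (-(2:ℝ)) + (b-a) ^ (-α)) * (b ^ α - a ^ α) ^ 2 := by rw [ha2]
  -- case b < a : larger base is a
  · have hd0 : (0:ℝ) < a - b := by linarith
    have habs : |b - a| = a - b := by rw [abs_sub_comm]; exact abs_of_pos hd0
    rw [habs] at hd ⊢
    have key : (a - b) ^ (2:ℝ) * a ^ (2*α - 2) ≤ (b ^ α - a ^ α) ^ 2 := by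
      have h' := lemA2 hα.le hb0 h.le
      have e : (a ^ α - b ^ α) ^ 2 = (b ^ α - a ^ α) ^ 2 := by ring
      linarith [e ▸ h']
    have main : a ^ α * b ^ α ≤ a ^ (2:ℝ) * (1 + (a - b) ^ (2 - α)) * a ^ (2*α - 2) := by
      have hba : b ^ α ≤ a ^ α := Real.rpow_le_rpow hb0.le h.le hα0.le
      have e2 : a ^ (2:ℝ) * a ^ (2*α-2) = a ^ α * a ^ α := by
        rw [← Real.rpow_add ha0, ← Real.rpow_add ha0]; ring_nf
      have s1 : a ^ α * b ^ α ≤ a ^ α * a ^ α :=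
        mul_le_mul_of_nonneg_left hba (rpow_nonneg ha0.le α)
      have s3 : a ^ (2:ℝ) * (1 + (a-b) ^ (2-α)) * a ^ (2*α-2)
          = a ^ (2:ℝ) * a ^ (2*α-2) + (a ^ (2:ℝ) * a ^ (2*α-2)) * (a-b) ^ (2-α) := by ring
      have s2 : 0 ≤ (a ^ (2:ℝ) * a ^ (2*α-2)) * (a-b) ^ (2-α) := by positivity
      linarith
    calc a ^ α * b ^ α ≤ a ^ (2:ℝ) * (1 + (a-b) ^ (2-α)) * a ^ (2*α-2) := main
    _ = (a ^ (2:ℝ) * ((a-b) ^ (-(2:ℝ)) + (a-b) ^ (-α))) * ((a-b) ^ (2:ℝ) * a ^ (2*α-2)) := by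
        have f1 : (a-b) ^ (-(2:ℝ)) * (a-b) ^ (2:ℝ) = 1 := by
          rw [← Real.rpow_add hd0]; norm_num
        have f2 : (a-b) ^ (-α) * (a-b) ^ (2:ℝ) = (a-b) ^ (2-α) := by
          rw [← Real.rpow_add hd0]; ring_nf
        calc a ^ (2:ℝ) * (1 + (a-b) ^ (2-α)) * a ^ (2*α-2)
            = a ^ (2:ℝ) * ((a-b) ^ (-(2:ℝ)) * (a-b) ^ (2:ℝ)
              + (a-b) ^ (-α) * (a-b) ^ (2:ℝ)) * a ^ (2*α-2) := by rw [f1, f2]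
        _ = (a ^ (2:ℝ) * ((a-b) ^ (-(2:ℝ)) + (a-b) ^ (-α))) * ((a-b) ^ (2:ℝ) * a ^ (2*α-2)) := by
            ring
    _ ≤ (a ^ (2:ℝ) * ((a-b) ^ (-(2:ℝ)) + (a-b) ^ (-α))) * (b ^ α - a ^ α) ^ 2 := by
        apply mul_le_mul_of_nonneg_left key
        positivity
    _ = a ^ 2 * ((a-b) ^ (-(2:ℝ)) + (a-b) ^ (-α)) * (b ^ α - a ^ α) ^ 2 := by rw [ha2]

/-- For θ_j = j^{-α} with α > 1, Σ_{k≠j} (θ_j-θ_k)^{-2} θ_j θ_k ≤ D j². -/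
theorem stmt_9 (α : ℝ) (hα : 1 < α)
    (θ : ℕ → ℝ) (hθ : ∀ j : ℕ, 1 ≤ j → θ j = (j : ℝ) ^ (-α)) :
    ∃ D : ℝ, 0 < D ∧ ∀ j : ℕ, 1 ≤ j →
      (∑' k : ℕ, if 1 ≤ k ∧ k ≠ j then (θ j - θ k) ^ (-2 : ℤ) * θ j * θ k else 0)
        ≤ D * (j : ℝ) ^ 2 := by
  have hS2 : Summable (fun n : ℕ => ((n:ℝ)+1) ^ (-(2:ℝ))) := sum_shift_summable one_lt_two
  have hSα : Summable (fun n : ℕ => ((n:ℝ)+1) ^ (-α)) := sum_shift_summable hα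
  have hS : Summable (fun n : ℕ => ((n:ℝ)+1) ^ (-(2:ℝ)) + ((n:ℝ)+1) ^ (-α)) := hS2.add hSα
  set S := ∑' n : ℕ, (((n:ℝ)+1) ^ (-(2:ℝ)) + ((n:ℝ)+1) ^ (-α)) with hSdef
  have hS0 : 0 ≤ S := tsum_nonneg (fun n => by positivity)
  refine ⟨2*S + 1, by linarith, ?_⟩
  intro j hj
  have hj1 : (1:ℝ) ≤ (j:ℝ) := by exact_mod_cast hj
  set W : ℕ → ℝ := fun k => if 1 ≤ k ∧ k ≠ j then
      (|(k:ℝ) - (j:ℝ)| ^ (-(2:ℝ)) + |(k:ℝ) - (j:ℝ)| ^ (-α)) else 0 with hWdef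
  have hW0 : ∀ k, 0 ≤ W k := by
    intro k; simp only [hWdef]; split <;> positivity
  have hFW : ∀ k, (if 1 ≤ k ∧ k ≠ j then (θ j - θ k) ^ (-2 : ℤ) * θ j * θ k else 0)
      ≤ (j:ℝ)^2 * W k := by
    intro k
    by_cases hk : 1 ≤ k ∧ k ≠ j
    · rw [if_pos hk]
      simp only [hWdef, if_pos hk]
      have hk1 : (1:ℝ) ≤ (k:ℝ) := by exact_mod_cast hk.1
      have hab : (j:ℝ) ≠ (k:ℝ) := by exact_mod_cast hk.2.symm
      have hd : (1:ℝ) ≤ |(k:ℝ) - (j:ℝ)| := by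
        have hne : (k:ℤ) ≠ (j:ℤ) := by exact_mod_cast hk.2
        have h1 : (1:ℤ) ≤ |(k:ℤ) - (j:ℤ)| := Int.one_le_abs (sub_ne_zero.mpr hne)
        have h2 : ((1:ℤ):ℝ) ≤ ((|(k:ℤ) - (j:ℤ)|:ℤ):ℝ) := Int.cast_le.mpr h1
        push_cast at h2
        exact h2
      rw [hθ j hj, hθ k hk.1]
      exact core hα hj1 hk1 hab hd
    · rw [if_neg hk]
      exact mul_nonneg (by positivity) (hW0 k)
  have hF0 : ∀ k, 0 ≤ (if 1 ≤ k ∧ k ≠ j then (θ j - θ k) ^ (-2 : ℤ) * θ j * θ k else 0) := by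
    intro k
    by_cases hk : 1 ≤ k ∧ k ≠ j
    · rw [if_pos hk, hθ j hj, hθ k hk.1,
        show ((j:ℝ) ^ (-α) - (k:ℝ) ^ (-α)) ^ (-2 : ℤ)
          = (((j:ℝ) ^ (-α) - (k:ℝ) ^ (-α)) ^ 2)⁻¹ from by rw [zpow_neg]; norm_cast]
      positivity
    · rw [if_neg hk]
  -- summable W with identified tail
  have heq : ∀ n : ℕ, W (n + (j+1)) = ((n:ℝ)+1) ^ (-(2:ℝ)) + ((n:ℝ)+1) ^ (-α) := by
    intro n
    have h1 : 1 ≤ n + (j+1) := by omega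
    have h2 : n + (j+1) ≠ j := by omega
    simp only [hWdef, if_pos (⟨h1, h2⟩ : 1 ≤ n + (j+1) ∧ n + (j+1) ≠ j)]
    have habs : |((n + (j+1) : ℕ):ℝ) - (j:ℝ)| = (n:ℝ) + 1 := by
      push_cast
      rw [show ((n:ℝ) + ((j:ℝ)+1)) - (j:ℝ) = (n:ℝ) + 1 by ring]
      exact abs_of_nonneg (by positivity)
    rw [habs]
  have hWsum : Summable W :=
    (_root_.summable_nat_add_iff (j+1)).mp (hS.congr (fun n => (heq n).symm))
  -- H : reflected version of W for the finite part
  set H : ℕ → ℝ := fun d => if d = 0 then 0 else ((d:ℝ)) ^ (-(2:ℝ)) + (d:ℝ) ^ (-α) with hHdef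
  have hH0 : ∀ d, 0 ≤ H d := by
    intro d; simp only [hHdef]; split <;> positivity
  have hHeq : ∀ n : ℕ, H (n + 1) = ((n:ℝ)+1) ^ (-(2:ℝ)) + ((n:ℝ)+1) ^ (-α) := by
    intro n
    simp only [hHdef, if_neg (Nat.succ_ne_zero n)]
    push_cast
    ring_nf
  have hHsum : Summable H :=
    (_root_.summable_nat_add_iff 1).mp (hS.congr (fun n => (hHeq n).symm))
  have hHtsum : ∑' d, H d = S := by
    rw [← hHsum.sum_add_tsum_nat_add 1]
    have : ∑ i ∈ Finset.range 1, H i = 0 := by simp [hHdef]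
    rw [this, tsum_congr hHeq]
    rw [zero_add, hSdef]
  have hWtsum : ∑' k, W k ≤ 2 * S := by
    rw [← hWsum.sum_add_tsum_nat_add (j+1), tsum_congr heq]
    have hfin : ∑ i ∈ Finset.range (j+1), W i ≤ S := by
      have step1 : ∑ i ∈ Finset.range (j+1), W i ≤ ∑ i ∈ Finset.range (j+1), H (j - i) := by
        apply Finset.sum_le_sum
        intro i hi
        have hij : i ≤ j := by
          have := Finset.mem_range.mp hi; omega
        by_cases h1 : 1 ≤ i ∧ i ≠ j
        · have hlt : i < j := lt_of_le_of_ne hij h1.2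
          have hd0 : j - i ≠ 0 := by omega
          simp only [hWdef, hHdef, if_pos h1, if_neg hd0]
          have e1 : ((j - i : ℕ):ℝ) = (j:ℝ) - (i:ℝ) := by
            push_cast [Nat.cast_sub hij]; ring
          have e2 : |(i:ℝ) - (j:ℝ)| = (j:ℝ) - (i:ℝ) := by
            rw [abs_sub_comm]
            exact abs_of_nonneg (sub_nonneg.mpr (by exact_mod_cast hij))
          rw [e1, e2]
        · simp only [hWdef, if_neg h1]
          exact hH0 _
      have step2 : ∑ i ∈ Finset.range (j+1), H (j - i) = ∑ d ∈ Finset.range (j+1), H d := by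
        have := Finset.sum_range_reflect H (j+1)
        simpa using this
      have step3 : ∑ d ∈ Finset.range (j+1), H d ≤ ∑' d, H d :=
        Summable.sum_le_tsum _ (fun i _ => hH0 i) hHsum
      linarith [hHtsum]
    linarith
  have hG : Summable (fun k => (j:ℝ)^2 * W k) := hWsum.mul_left _
  have hFs : Summable (fun k => if 1 ≤ k ∧ k ≠ j then (θ j - θ k) ^ (-2 : ℤ) * θ j * θ k else 0) :=
    Summable.of_nonneg_of_le hF0 hFW hG
  calc (∑' k : ℕ, if 1 ≤ k ∧ k ≠ j then (θ j - θ k) ^ (-2 : ℤ) * θ j * θ k else 0)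
      ≤ ∑' k, (j:ℝ)^2 * W k := Summable.tsum_le_tsum hFW hFs hG
  _ = (j:ℝ)^2 * ∑' k, W k := tsum_mul_left
  _ ≤ (j:ℝ)^2 * (2*S) := mul_le_mul_of_nonneg_left hWtsum (by positivity)
  _ ≤ (2*S + 1) * (j:ℝ)^2 := by nlinarith [sq_nonneg (j:ℝ)]
end

section
/- Let α > 1 and π be real with θ_j = j^{-α}, and suppose |p_k| ≤ C k^{-π} for all k ≥ 1. Then for d = 2 or d = 4 there is a constant C' > 0 such that for all j ≥ 1, Σ_{k≠j} (θ_j - θ_k)^{-d} p_k² ≤ C' (1 + j^{αd + d - 2π}). -/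
lemma aux_gap {α x y : ℝ} (hα : 1 ≤ α) (hx : 1 ≤ x) (hxy : x ≤ y) :
    (y - x) * y ^ (-(α + 1)) ≤ x ^ (-α) - y ^ (-α) := by
  have hx0 : (0:ℝ) < x := lt_of_lt_of_le one_pos hx
  have hy : (1:ℝ) ≤ y := hx.trans hxy
  have hy0 : (0:ℝ) < y := lt_of_lt_of_le one_pos hy
  have hA : (0:ℝ) < x ^ α := Real.rpow_pos_of_pos hx0 _
  have hB : (0:ℝ) < y ^ α := Real.rpow_pos_of_pos hy0 _
  have ht : (1:ℝ) ≤ y / x := (one_le_div hx0).2 hxy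
  have h1 : y / x ≤ (y / x) ^ α := by
    calc y / x = (y / x) ^ (1:ℝ) := by rw [Real.rpow_one]
    _ ≤ (y / x) ^ α := Real.rpow_le_rpow_of_exponent_le ht hα
  have h2 : (y / x) ^ α = y ^ α / x ^ α := Real.div_rpow hy0.le hx0.le α
  have h3 : 2 ≤ y / x + x / y := by
    rw [div_add_div _ _ hx0.ne' hy0.ne', le_div_iff₀ (by positivity)]
    nlinarith [sq_nonneg (y - x)]
  have key : x ^ α * (2 * y - x) ≤ y ^ α * y := by
    have h4 : 2 - x / y ≤ y ^ α / x ^ α := by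
      calc 2 - x / y ≤ y / x := by linarith
      _ ≤ (y / x) ^ α := h1
      _ = y ^ α / x ^ α := h2
    have h5 : (2 * y - x) / y ≤ y ^ α / x ^ α := by
      rw [sub_div, mul_div_assoc, div_self hy0.ne']
      simpa [mul_one] using h4
    rw [div_le_div_iff₀ hy0 hA] at h5
    linarith
  have e1 : x ^ (-α) = (x ^ α)⁻¹ := Real.rpow_neg hx0.le α
  have e2 : y ^ (-α) = (y ^ α)⁻¹ := Real.rpow_neg hy0.le α
  have e3 : y ^ (-(α + 1)) = (y ^ α * y)⁻¹ := by
    rw [Real.rpow_neg hy0.le, Real.rpow_add hy0, Real.rpow_one]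
  rw [e1, e2, e3]
  have h6 : (y - x) * (y ^ α * y)⁻¹ = (y - x) / (y ^ α * y) := by rw [div_eq_mul_inv]
  have h7 : (x ^ α)⁻¹ - (y ^ α)⁻¹ = (y ^ α - x ^ α) / (x ^ α * y ^ α) := by
    field_simp
  rw [h6, h7, div_le_div_iff₀ (by positivity) (by positivity)]
  nlinarith [mul_le_mul_of_nonneg_left key hB.le]

lemma aux_basel (n : ℕ) : ∑ m ∈ Finset.Icc 1 n, (((m:ℝ)) ^ 2)⁻¹ ≤ 2 - 2 / (n + 1) := by
  induction n with
  | zero => simp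
  | succ n ih =>
    rw [Finset.sum_Icc_succ_top (by omega)]
    have h1 : (0:ℝ) < n + 1 := by positivity
    have h2 : (0:ℝ) < n + 2 := by positivity
    have : ((((n:ℕ)+1:ℕ):ℝ) ^ 2)⁻¹ ≤ 2 / (n + 1) - 2 / (n + 2) := by
      push_cast
      rw [div_sub_div _ _ h1.ne' h2.ne', le_div_iff₀ (by positivity), inv_mul_eq_div,
        div_le_iff₀ (by positivity)]
      ring_nf
      nlinarith
    push_cast at *
    have e : ((n:ℝ) + 1 + 1) = (n:ℝ) + 2 := by ring
    rw [e]
    linarith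

lemma aux_dist (j n : ℕ) :
    ∑ k ∈ (Finset.Icc 1 n).erase j, (((k:ℝ) - (j:ℝ)) ^ 2)⁻¹ ≤ 4 := by
  classical
  set s := (Finset.Icc 1 n).erase j with hs
  have hsplit := Finset.sum_filter_add_sum_filter_not s (fun k => k < j)
      (fun k => (((k:ℝ) - (j:ℝ)) ^ 2)⁻¹)
  have h1 : ∑ k ∈ s.filter (fun k => k < j), (((k:ℝ) - (j:ℝ)) ^ 2)⁻¹ ≤ 2 := by
    have he : ∑ k ∈ s.filter (fun k => k < j), (((k:ℝ) - (j:ℝ)) ^ 2)⁻¹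
        = ∑ m ∈ (s.filter (fun k => k < j)).image (fun k => j - k), (((m:ℝ)) ^ 2)⁻¹ := by
      rw [Finset.sum_image]
      · refine Finset.sum_congr rfl (fun k hk => ?_)
        simp only [Finset.mem_filter] at hk
        have hkj : k ≤ j := hk.2.le
        have : ((j - k : ℕ) : ℝ) = (j:ℝ) - (k:ℝ) := by
          push_cast [Nat.cast_sub hkj]; ring
        rw [this]; ring_nf
      · intro a ha b hb hab
        simp only [Finset.mem_coe, Finset.mem_filter] at ha hb hab
        omega
    rw [he]
    calc _ ≤ ∑ m ∈ Finset.Icc 1 j, (((m:ℝ)) ^ 2)⁻¹ := by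
          apply Finset.sum_le_sum_of_subset_of_nonneg
          · intro m hm
            simp only [Finset.mem_image, Finset.mem_filter, hs, Finset.mem_erase,
              Finset.mem_Icc] at hm ⊢
            omega
          · intro m _ _; positivity
      _ ≤ 2 - 2 / (j + 1) := aux_basel j
      _ ≤ 2 := by
          have : (0:ℝ) ≤ 2 / (j + 1) := by positivity
          linarith
  have h2 : ∑ k ∈ s.filter (fun k => ¬ k < j), (((k:ℝ) - (j:ℝ)) ^ 2)⁻¹ ≤ 2 := by
    have he : ∑ k ∈ s.filter (fun k => ¬ k < j), (((k:ℝ) - (j:ℝ)) ^ 2)⁻¹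
        = ∑ m ∈ (s.filter (fun k => ¬ k < j)).image (fun k => k - j), (((m:ℝ)) ^ 2)⁻¹ := by
      rw [Finset.sum_image]
      · refine Finset.sum_congr rfl (fun k hk => ?_)
        simp only [Finset.mem_filter, hs, Finset.mem_erase] at hk
        have hkj : j ≤ k := not_lt.mp hk.2
        have : ((k - j : ℕ) : ℝ) = (k:ℝ) - (j:ℝ) := by
          push_cast [Nat.cast_sub hkj]; ring
        rw [this]
      · intro a ha b hb hab
        simp only [Finset.mem_coe, Finset.mem_filter, hs, Finset.mem_erase] at ha hb hab
        omega
    rw [he]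
    calc _ ≤ ∑ m ∈ Finset.Icc 1 n, (((m:ℝ)) ^ 2)⁻¹ := by
          apply Finset.sum_le_sum_of_subset_of_nonneg
          · intro m hm
            simp only [Finset.mem_image, Finset.mem_filter, hs, Finset.mem_erase,
              Finset.mem_Icc] at hm ⊢
            omega
          · intro m _ _; positivity
      _ ≤ 2 - 2 / (n + 1) := aux_basel n
      _ ≤ 2 := by
          have : (0:ℝ) ≤ 2 / (n + 1) := by positivity
          linarith
  linarith

lemma aux_zpow_nonneg {x : ℝ} {d : ℕ} (hd : Even d) : 0 ≤ x ^ (-(d:ℤ)) := by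
  rw [zpow_neg, zpow_natCast]
  exact inv_nonneg.2 (hd.pow_nonneg x)

lemma aux_zpow_le {x G : ℝ} {d : ℕ} (hd : Even d) (hG : 0 < G) (h : G ≤ |x|) :
    x ^ (-(d:ℤ)) ≤ (G ^ d)⁻¹ := by
  rw [zpow_neg, zpow_natCast, ← hd.pow_abs x]
  exact inv_anti₀ (by positivity) (pow_le_pow_left₀ hG.le h d)

lemma aux_pow_inv {c t : ℝ} (hc : 0 < c) (ht : 0 < t) (a : ℝ) (d : ℕ) :
    ((c * t ^ a) ^ d)⁻¹ = (c ^ d)⁻¹ * t ^ (-(a * d)) := by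
  rw [mul_pow, mul_inv, ← Real.rpow_natCast (t ^ a) d, ← Real.rpow_mul ht.le,
    ← Real.rpow_neg ht.le]

lemma aux_rpow_inv {t : ℝ} (ht : 0 < t) (a : ℝ) (d : ℕ) :
    ((t ^ a) ^ d)⁻¹ = t ^ (-(a * d)) := by
  rw [← Real.rpow_natCast (t ^ a) d, ← Real.rpow_mul ht.le, ← Real.rpow_neg ht.le]

lemma aux_mid_pow {m s : ℝ} (hm : 1 ≤ m) (hs : 0 < s) {d : ℕ} (hd : 2 ≤ d) :
    ((m * s) ^ d)⁻¹ ≤ (m ^ 2)⁻¹ * (s ^ d)⁻¹ := by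
  rw [mul_pow, mul_inv]
  have h1 : m ^ 2 ≤ m ^ d := pow_le_pow_right₀ hm hd
  have h2 : (0:ℝ) < m ^ 2 := by positivity
  exact mul_le_mul_of_nonneg_right (inv_anti₀ h2 h1) (by positivity)

lemma aux_mid_pi {π jx kx : ℝ} (hj : 1 ≤ jx) (hk : 1 ≤ kx) (h1 : jx ≤ 2 * kx)
    (h2 : kx ≤ 2 * jx) : kx ^ (-(2 * π)) ≤ 2 ^ (2 * |π|) * jx ^ (-(2 * π)) := by
  have hj0 : (0:ℝ) < jx := lt_of_lt_of_le one_pos hj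
  have hk0 : (0:ℝ) < kx := lt_of_lt_of_le one_pos hk
  rcases le_or_gt 0 π with hπ | hπ
  · have habs : |π| = π := abs_of_nonneg hπ
    have hb : jx / 2 ≤ kx := by linarith
    have : kx ^ (-(2*π)) ≤ (jx / 2) ^ (-(2*π)) :=
      Real.rpow_le_rpow_of_nonpos (by positivity) hb (by linarith)
    calc kx ^ (-(2*π)) ≤ (jx / 2) ^ (-(2*π)) := this
      _ = jx ^ (-(2*π)) / 2 ^ (-(2*π)) := Real.div_rpow hj0.le (by norm_num) _
      _ = 2 ^ (2*π) * jx ^ (-(2*π)) := by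
          rw [div_eq_mul_inv, ← Real.rpow_neg (by norm_num : (0:ℝ) ≤ 2), neg_neg, mul_comm]
      _ = 2 ^ (2*|π|) * jx ^ (-(2*π)) := by rw [habs]
  · have habs : |π| = -π := abs_of_neg hπ
    have : kx ^ (-(2*π)) ≤ (2 * jx) ^ (-(2*π)) :=
      Real.rpow_le_rpow hk0.le h2 (by linarith)
    calc kx ^ (-(2*π)) ≤ (2 * jx) ^ (-(2*π)) := this
      _ = 2 ^ (-(2*π)) * jx ^ (-(2*π)) := Real.mul_rpow (by norm_num) hj0.le
      _ = 2 ^ (2*|π|) * jx ^ (-(2*π)) := by rw [habs]; ring_nf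


lemma aux_gap_out {α : ℝ} (hα : 0 < α) {jx kx : ℝ} (hj : 1 ≤ jx) (h : 2 * jx ≤ kx) :
    (1 - 2 ^ (-α)) * jx ^ (-α) ≤ jx ^ (-α) - kx ^ (-α) := by
  have hj0 : (0:ℝ) < jx := lt_of_lt_of_le one_pos hj
  have h1 : kx ^ (-α) ≤ (2 * jx) ^ (-α) :=
    Real.rpow_le_rpow_of_nonpos (by linarith) h (by linarith)
  have h2 : (2 * jx) ^ (-α) = 2 ^ (-α) * jx ^ (-α) := Real.mul_rpow (by norm_num) hj0.le
  nlinarith [Real.rpow_pos_of_pos hj0 (-α)]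

lemma aux_gap_low {α : ℝ} (hα : 0 < α) {jx kx : ℝ} (hk : 1 ≤ kx) (h : 2 * kx ≤ jx) :
    (1 - 2 ^ (-α)) * kx ^ (-α) ≤ kx ^ (-α) - jx ^ (-α) := aux_gap_out hα hk h

lemma aux_gap_mid {α : ℝ} (hα : 1 ≤ α) {jx kx : ℝ} (hj : 1 ≤ jx) (hk : 1 ≤ kx)
    (h2 : kx ≤ 2 * jx) (hne : kx ≠ jx) :
    |kx - jx| * (2 * jx) ^ (-(α + 1)) ≤ |jx ^ (-α) - kx ^ (-α)| := by
  have hj0 : (0:ℝ) < jx := lt_of_lt_of_le one_pos hj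
  have hk0 : (0:ℝ) < kx := lt_of_lt_of_le one_pos hk
  rcases lt_or_gt_of_ne hne with h | h
  · have hgap := aux_gap hα hk h.le
    have hmono : (2 * jx) ^ (-(α + 1)) ≤ jx ^ (-(α + 1)) :=
      Real.rpow_le_rpow_of_nonpos hj0 (by linarith) (by linarith)
    have habs1 : |kx - jx| = jx - kx := by rw [abs_of_neg (by linarith)]; ring
    have hpos : 0 < kx ^ (-α) - jx ^ (-α) := by
      have := Real.rpow_lt_rpow_of_neg hk0 h (by linarith : -α < 0)
      linarith
    have habs2 : |jx ^ (-α) - kx ^ (-α)| = kx ^ (-α) - jx ^ (-α) := by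
      rw [abs_of_neg (by linarith)]; ring
    rw [habs1, habs2]
    calc (jx - kx) * (2 * jx) ^ (-(α + 1)) ≤ (jx - kx) * jx ^ (-(α + 1)) := by
          apply mul_le_mul_of_nonneg_left hmono (by linarith)
      _ ≤ kx ^ (-α) - jx ^ (-α) := hgap
  · have hgap := aux_gap hα hj h.le
    have hmono : (2 * jx) ^ (-(α + 1)) ≤ kx ^ (-(α + 1)) :=
      Real.rpow_le_rpow_of_nonpos hk0 h2 (by linarith)
    have habs1 : |kx - jx| = kx - jx := by rw [abs_of_pos (by linarith)]
    have hpos : 0 < jx ^ (-α) - kx ^ (-α) := by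
      have := Real.rpow_lt_rpow_of_neg hj0 h (by linarith : -α < 0)
      linarith
    have habs2 : |jx ^ (-α) - kx ^ (-α)| = jx ^ (-α) - kx ^ (-α) :=
      abs_of_pos hpos
    rw [habs1, habs2]
    calc (kx - jx) * (2 * jx) ^ (-(α + 1)) ≤ (kx - jx) * kx ^ (-(α + 1)) := by
          apply mul_le_mul_of_nonneg_left hmono (by linarith)
      _ ≤ jx ^ (-α) - kx ^ (-α) := hgap

set_option maxHeartbeats 2000000

/-- For θ_j = j^{-α}, α > 1, |p_k| ≤ C k^{-π}, and d = 2 or d = 4, there is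
C' > 0 with Σ_{k≠j} (θ_j-θ_k)^{-d} p_k² ≤ C' (1 + j^{αd+d-2π}) for all j ≥ 1. -/
theorem stmt_10 (α π C : ℝ) (hα : 1 < α) (hC : 0 < C)
    (θ : ℕ → ℝ) (hθ : ∀ j : ℕ, 1 ≤ j → θ j = (j : ℝ) ^ (-α))
    (p : ℕ → ℝ) (hp : ∀ k : ℕ, 1 ≤ k → |p k| ≤ C * (k : ℝ) ^ (-π))
    (d : ℕ) (hd : d = 2 ∨ d = 4) :
    ∃ C' : ℝ, 0 < C' ∧ ∀ j : ℕ, 1 ≤ j →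
      (∑' k : ℕ, if 1 ≤ k ∧ k ≠ j then (θ j - θ k) ^ (-(d : ℤ)) * (p k) ^ 2 else 0)
        ≤ C' * (1 + (j : ℝ) ^ (α * d + d - 2 * π)) := by
  have hdeven : Even d := by rcases hd with h | h <;> subst h <;> decide
  have hd2 : 2 ≤ d := by rcases hd with h | h <;> subst h <;> norm_num
  have hd2' : (2:ℝ) ≤ (d:ℝ) := by exact_mod_cast hd2
  set F : ℕ → ℕ → ℝ :=
    fun j k => if 1 ≤ k ∧ k ≠ j then (θ j - θ k) ^ (-(d : ℤ)) * (p k) ^ 2 else 0 with hF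
  have hFnn : ∀ j k, 0 ≤ F j k := by
    intro j k
    simp only [hF]
    split
    · exact mul_nonneg (aux_zpow_nonneg hdeven) (sq_nonneg _)
    · exact le_refl _
  have hterm : ∀ j k : ℕ, 1 ≤ k → k ≠ j → ∀ G : ℝ, 0 < G → G ≤ |θ j - θ k| →
      F j k ≤ (G ^ d)⁻¹ * p k ^ 2 := by
    intro j k hk hne G hG hGle
    simp only [hF, if_pos (And.intro hk hne)]
    exact mul_le_mul_of_nonneg_right (aux_zpow_le hdeven hG hGle) (sq_nonneg _)
  have pb : ∀ k : ℕ, 1 ≤ k → p k ^ 2 ≤ C ^ 2 * (k:ℝ) ^ (-(2 * π)) := by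
    intro k hk
    have hk0 : (0:ℝ) < k := by exact_mod_cast hk
    have h1 : p k ^ 2 = |p k| ^ 2 := (sq_abs _).symm
    have h2 : |p k| ^ 2 ≤ (C * (k:ℝ) ^ (-π)) ^ 2 :=
      pow_le_pow_left₀ (abs_nonneg _) (hp k hk) 2
    have h3 : (C * (k:ℝ) ^ (-π)) ^ 2 = C ^ 2 * ((k:ℝ) ^ (-π)) ^ 2 := by ring
    have h4 : ((k:ℝ) ^ (-π)) ^ 2 = (k:ℝ) ^ (-(2 * π)) := by
      rw [← Real.rpow_natCast ((k:ℝ) ^ (-π)) 2, ← Real.rpow_mul hk0.le]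
      congr 1
      push_cast
      ring
    rw [h1]
    rw [h3, h4] at h2
    exact h2
  by_cases hps : Summable (fun k => p k ^ 2)
  · -- summable case
    set c₀ := 1 - (2:ℝ) ^ (-α) with hc₀def
    have hc₀ : 0 < c₀ := by
      have : (2:ℝ) ^ (-α) < 1 :=
        Real.rpow_lt_one_of_one_lt_of_neg one_lt_two (by linarith)
      simp only [hc₀def]; linarith
    have hc₀d : (0:ℝ) < (c₀ ^ d)⁻¹ := by positivity
    set cmin := min c₀ ((2:ℝ) ^ (-(α + 1))) with hcmindef
    have hcmin : 0 < cmin := lt_min hc₀ (Real.rpow_pos_of_pos two_pos _)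
    set T := α * (d:ℝ) + (d:ℝ) - 2 * π with hTdef
    set β := α * (d:ℝ) - 2 * π with hβdef
    have hβT : T = β + d := by rw [hTdef, hβdef]; ring
    set S := ∑' k, p k ^ 2 with hSdef
    have hS0 : 0 ≤ S := tsum_nonneg (fun k => sq_nonneg _)
    have hone : ∀ (j k : ℕ), k ≠ j → (1:ℝ) ≤ |(k:ℝ) - (j:ℝ)| := by
      intro j k h
      rcases lt_or_gt_of_ne h with h' | h'
      · rw [abs_of_neg (by exact_mod_cast sub_neg.2 (by exact_mod_cast h' : (k:ℝ) < j))]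
        have : (k:ℝ) + 1 ≤ j := by exact_mod_cast h'
        linarith
      · rw [abs_of_pos (by exact_mod_cast sub_pos.2 (by exact_mod_cast h' : (j:ℝ) < k))]
        have : (j:ℝ) + 1 ≤ k := by exact_mod_cast h'
        linarith
    -- uniform gap lower bound
    have hgapall : ∀ j k : ℕ, 1 ≤ j → 1 ≤ k → k ≠ j →
        cmin * (j:ℝ) ^ (-(α + 1)) ≤ |θ j - θ k| := by
      intro j k hj hk hne
      have hjx : (1:ℝ) ≤ (j:ℝ) := by exact_mod_cast hj
      have hkx : (1:ℝ) ≤ (k:ℝ) := by exact_mod_cast hk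
      have hjx0 : (0:ℝ) < (j:ℝ) := by linarith
      have hnex : (k:ℝ) ≠ (j:ℝ) := by exact_mod_cast hne
      rw [hθ j hj, hθ k hk]
      rcases le_or_gt k (2 * j) with h2j | h2j
      · have h2jx : (k:ℝ) ≤ 2 * (j:ℝ) := by exact_mod_cast h2j
        have hmid := aux_gap_mid hα.le hjx hkx h2jx hnex
        have h1 : cmin * (j:ℝ) ^ (-(α + 1)) ≤ |(k:ℝ) - (j:ℝ)| * (2 * (j:ℝ)) ^ (-(α + 1)) := by
          have e : (2 * (j:ℝ)) ^ (-(α + 1)) = 2 ^ (-(α+1)) * (j:ℝ) ^ (-(α+1)) :=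
            Real.mul_rpow (by norm_num) hjx0.le
          rw [e]
          have hc : cmin ≤ 2 ^ (-(α+1)) := min_le_right _ _
          have h1m := hone j k hne
          have hjp : (0:ℝ) < (j:ℝ) ^ (-(α+1)) := Real.rpow_pos_of_pos hjx0 _
          have h2p : (0:ℝ) < (2:ℝ) ^ (-(α+1)) := Real.rpow_pos_of_pos two_pos _
          calc cmin * (j:ℝ) ^ (-(α + 1))
              ≤ 2 ^ (-(α+1)) * (j:ℝ) ^ (-(α+1)) :=
                mul_le_mul_of_nonneg_right hc hjp.le
            _ ≤ |(k:ℝ) - (j:ℝ)| * (2 ^ (-(α+1)) * (j:ℝ) ^ (-(α+1))) :=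
                le_mul_of_one_le_left (by positivity) h1m
        exact h1.trans hmid
      · have h2jx : 2 * (j:ℝ) ≤ (k:ℝ) := by
          have : 2 * j ≤ k := by omega
          exact_mod_cast this
        have hout := aux_gap_out (by linarith : 0 < α) hjx h2jx
        have h1 : cmin * (j:ℝ) ^ (-(α + 1)) ≤ c₀ * (j:ℝ) ^ (-α) := by
          have hc : cmin ≤ c₀ := min_le_left _ _
          have hm : (j:ℝ) ^ (-(α+1)) ≤ (j:ℝ) ^ (-α) :=
            Real.rpow_le_rpow_of_exponent_le hjx (by linarith)
          nlinarith [Real.rpow_pos_of_pos hjx0 (-(α+1))]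
        calc cmin * (j:ℝ) ^ (-(α + 1)) ≤ c₀ * (j:ℝ) ^ (-α) := h1
          _ ≤ (j:ℝ) ^ (-α) - (k:ℝ) ^ (-α) := hout
          _ ≤ |(j:ℝ) ^ (-α) - (k:ℝ) ^ (-α)| := le_abs_self _
    -- summability of each series
    have hFsum : ∀ j : ℕ, 1 ≤ j → Summable (F j) := by
      intro j hj
      have hjx0 : (0:ℝ) < (j:ℝ) := by exact_mod_cast hj
      have hG0 : (0:ℝ) < cmin * (j:ℝ) ^ (-(α + 1)) :=
        mul_pos hcmin (Real.rpow_pos_of_pos hjx0 _)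
      apply Summable.of_nonneg_of_le (hFnn j) _
        (hps.mul_left ((cmin * (j:ℝ) ^ (-(α + 1))) ^ d)⁻¹)
      intro k
      by_cases hcond : 1 ≤ k ∧ k ≠ j
      · exact hterm j k hcond.1 hcond.2 _ hG0 (hgapall j k hj hcond.1 hcond.2)
      · have : F j k = 0 := by simp only [hF, if_neg hcond]
        rw [this]
        positivity
    -- mid part bound
    have hmid : ∀ j : ℕ, 1 ≤ j →
        ∑ k ∈ ((Finset.Icc 1 (2*j)).erase j).filter (fun k => ¬ 2*k ≤ j), F j k ≤
          (4 * ((2:ℝ) ^ ((α+1) * (d:ℝ)) * 2 ^ (2*|π|) * C^2)) * (j:ℝ) ^ T := by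
      intro j hj
      have hjx : (1:ℝ) ≤ (j:ℝ) := by exact_mod_cast hj
      have hjx0 : (0:ℝ) < (j:ℝ) := by linarith
      set Km := (2:ℝ) ^ ((α+1) * (d:ℝ)) * 2 ^ (2*|π|) * C^2 with hKmdef
      have hKm0 : 0 < Km := by positivity
      have key : ∀ k ∈ ((Finset.Icc 1 (2*j)).erase j).filter (fun k => ¬ 2*k ≤ j),
          F j k ≤ (Km * (j:ℝ) ^ T) * (((k:ℝ) - (j:ℝ))^2)⁻¹ := by
        intro k hkmem
        simp only [Finset.mem_filter, Finset.mem_erase, Finset.mem_Icc] at hkmem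
        obtain ⟨⟨hne, hk1, hk2j⟩, hmidc⟩ := hkmem
        have hkx : (1:ℝ) ≤ (k:ℝ) := by exact_mod_cast hk1
        have hkx0 : (0:ℝ) < (k:ℝ) := by linarith
        have h2jx : (k:ℝ) ≤ 2 * (j:ℝ) := by exact_mod_cast hk2j
        have hj2kx : (j:ℝ) ≤ 2 * (k:ℝ) := by
          have : j ≤ 2 * k := by omega
          exact_mod_cast this
        have hnex : (k:ℝ) ≠ (j:ℝ) := by exact_mod_cast hne
        set m := |(k:ℝ) - (j:ℝ)| with hmdef
        have hm1 : (1:ℝ) ≤ m := hone j k hne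
        set sb := (2 * (j:ℝ)) ^ (-(α+1)) with hsbdef
        have hsb0 : 0 < sb := Real.rpow_pos_of_pos (by linarith) _
        have hgap : m * sb ≤ |θ j - θ k| := by
          rw [hθ j hj, hθ k hk1]
          exact aux_gap_mid hα.le hjx hkx h2jx hnex
        have hstep1 : F j k ≤ ((m * sb) ^ d)⁻¹ * p k ^ 2 :=
          hterm j k hk1 hne _ (by positivity) hgap
        have hstep2 : ((m * sb) ^ d)⁻¹ ≤ (m^2)⁻¹ * (sb^d)⁻¹ := aux_mid_pow hm1 hsb0 hd2
        have hp2 : p k ^ 2 ≤ C^2 * (2 ^ (2*|π|) * (j:ℝ) ^ (-(2*π))) := by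
          calc p k ^ 2 ≤ C^2 * (k:ℝ) ^ (-(2*π)) := pb k hk1
            _ ≤ C^2 * (2 ^ (2*|π|) * (j:ℝ) ^ (-(2*π))) :=
              mul_le_mul_of_nonneg_left (aux_mid_pi hjx hkx hj2kx h2jx) (by positivity)
        have hsbd : (sb ^ d)⁻¹ = 2 ^ ((α+1) * (d:ℝ)) * (j:ℝ) ^ ((α+1) * (d:ℝ)) := by
          rw [hsbdef, aux_rpow_inv (by linarith : (0:ℝ) < 2 * (j:ℝ)),
            show -(-(α+1) * (d:ℝ)) = (α+1) * (d:ℝ) by ring,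
            Real.mul_rpow (by norm_num) hjx0.le]
        have hjT : (j:ℝ) ^ ((α+1) * (d:ℝ)) * (j:ℝ) ^ (-(2*π)) = (j:ℝ) ^ T := by
          rw [← Real.rpow_add hjx0, hTdef]
          congr 1
          ring
        calc F j k ≤ ((m * sb) ^ d)⁻¹ * p k ^ 2 := hstep1
          _ ≤ ((m^2)⁻¹ * (sb^d)⁻¹) * (C^2 * (2 ^ (2*|π|) * (j:ℝ) ^ (-(2*π)))) := by
              apply mul_le_mul hstep2 hp2 (sq_nonneg _) (by positivity)
          _ = (Km * ((j:ℝ) ^ ((α+1) * (d:ℝ)) * (j:ℝ) ^ (-(2*π)))) * (m^2)⁻¹ := by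
              rw [hsbd, hKmdef]; ring
          _ = (Km * (j:ℝ) ^ T) * (((k:ℝ) - (j:ℝ))^2)⁻¹ := by
              rw [hjT, hmdef, sq_abs]
      calc ∑ k ∈ ((Finset.Icc 1 (2*j)).erase j).filter (fun k => ¬ 2*k ≤ j), F j k
          ≤ ∑ k ∈ ((Finset.Icc 1 (2*j)).erase j).filter (fun k => ¬ 2*k ≤ j),
              (Km * (j:ℝ) ^ T) * (((k:ℝ) - (j:ℝ))^2)⁻¹ := Finset.sum_le_sum key
        _ = (Km * (j:ℝ) ^ T) *
              ∑ k ∈ ((Finset.Icc 1 (2*j)).erase j).filter (fun k => ¬ 2*k ≤ j),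
                (((k:ℝ) - (j:ℝ))^2)⁻¹ := by rw [Finset.mul_sum]
        _ ≤ (Km * (j:ℝ) ^ T) * ∑ k ∈ (Finset.Icc 1 (2*j)).erase j,
                (((k:ℝ) - (j:ℝ))^2)⁻¹ := by
            apply mul_le_mul_of_nonneg_left _ (by positivity)
            apply Finset.sum_le_sum_of_subset_of_nonneg (Finset.filter_subset _ _)
            intro i _ _
            positivity
        _ ≤ (Km * (j:ℝ) ^ T) * 4 := by
            apply mul_le_mul_of_nonneg_left (aux_dist j (2*j)) (by positivity)
        _ = (4 * Km) * (j:ℝ) ^ T := by ring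
    -- low part bound
    have hlowterm : ∀ j k : ℕ, 1 ≤ j → 1 ≤ k → 2*k ≤ j →
        F j k ≤ ((c₀ ^ d)⁻¹ * C^2) * (k:ℝ) ^ β := by
      intro j k hj hk h2k
      have hkx : (1:ℝ) ≤ (k:ℝ) := by exact_mod_cast hk
      have hkx0 : (0:ℝ) < (k:ℝ) := by linarith
      have hne : k ≠ j := by omega
      have h2kx : 2 * (k:ℝ) ≤ (j:ℝ) := by exact_mod_cast h2k
      have hgap : c₀ * (k:ℝ) ^ (-α) ≤ |θ j - θ k| := by
        rw [hθ j hj, hθ k hk]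
        calc c₀ * (k:ℝ) ^ (-α) ≤ (k:ℝ) ^ (-α) - (j:ℝ) ^ (-α) :=
              aux_gap_low (by linarith) hkx h2kx
          _ ≤ |(k:ℝ) ^ (-α) - (j:ℝ) ^ (-α)| := le_abs_self _
          _ = |(j:ℝ) ^ (-α) - (k:ℝ) ^ (-α)| := abs_sub_comm _ _
      have hstep1 : F j k ≤ ((c₀ * (k:ℝ) ^ (-α)) ^ d)⁻¹ * p k ^ 2 :=
        hterm j k hk hne _ (by positivity) hgap
      have he : ((c₀ * (k:ℝ) ^ (-α)) ^ d)⁻¹ = (c₀ ^ d)⁻¹ * (k:ℝ) ^ (α * (d:ℝ)) := by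
        rw [aux_pow_inv hc₀ hkx0, show -(-α * (d:ℝ)) = α * (d:ℝ) by ring]
      calc F j k ≤ ((c₀ * (k:ℝ) ^ (-α)) ^ d)⁻¹ * p k ^ 2 := hstep1
        _ ≤ ((c₀ ^ d)⁻¹ * (k:ℝ) ^ (α * (d:ℝ))) * (C^2 * (k:ℝ) ^ (-(2*π))) := by
            rw [he]
            exact mul_le_mul_of_nonneg_left (pb k hk) (by positivity)
        _ = ((c₀ ^ d)⁻¹ * C^2) * ((k:ℝ) ^ (α * (d:ℝ)) * (k:ℝ) ^ (-(2*π))) := by ring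
        _ = ((c₀ ^ d)⁻¹ * C^2) * (k:ℝ) ^ β := by
            rw [← Real.rpow_add hkx0]
            congr 1
    have hlow : ∃ A B : ℝ, 0 ≤ A ∧ 0 ≤ B ∧ ∀ j : ℕ, 1 ≤ j →
        ∑ k ∈ ((Finset.Icc 1 (2*j)).erase j).filter (fun k => 2*k ≤ j), F j k ≤
          A + B * (j:ℝ) ^ T := by
      set Kl := (c₀ ^ d)⁻¹ * C^2 with hKldef
      have hKl0 : 0 < Kl := by positivity
      rcases lt_or_ge β (-1) with hβ1 | hβ1
      · -- β < -1 : constant bound via tsum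
        have hsummβ : Summable (fun k : ℕ => (k:ℝ) ^ β) := Real.summable_nat_rpow.2 hβ1
        refine ⟨Kl * ∑' k : ℕ, (k:ℝ) ^ β, 0, ?_, le_refl 0, ?_⟩
        · have : 0 ≤ ∑' k : ℕ, (k:ℝ) ^ β :=
            tsum_nonneg (fun k => Real.rpow_nonneg (Nat.cast_nonneg k) β)
          positivity
        · intro j hj
          rw [zero_mul, add_zero]
          calc ∑ k ∈ ((Finset.Icc 1 (2*j)).erase j).filter (fun k => 2*k ≤ j), F j k
              ≤ ∑ k ∈ ((Finset.Icc 1 (2*j)).erase j).filter (fun k => 2*k ≤ j),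
                  Kl * (k:ℝ) ^ β := by
                apply Finset.sum_le_sum
                intro k hkmem
                simp only [Finset.mem_filter, Finset.mem_erase, Finset.mem_Icc] at hkmem
                exact hlowterm j k hj hkmem.1.2.1 hkmem.2
            _ = Kl * ∑ k ∈ ((Finset.Icc 1 (2*j)).erase j).filter (fun k => 2*k ≤ j),
                  (k:ℝ) ^ β := by rw [Finset.mul_sum]
            _ ≤ Kl * ∑' k : ℕ, (k:ℝ) ^ β := by
                apply mul_le_mul_of_nonneg_left _ hKl0.le
                exact Summable.sum_le_tsum _ (fun k _ => Real.rpow_nonneg (Nat.cast_nonneg k) β)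
                  hsummβ
      · -- β ≥ -1 : polynomial bound
        refine ⟨0, 4 * Kl, le_refl 0, by positivity, ?_⟩
        intro j hj
        have hjx : (1:ℝ) ≤ (j:ℝ) := by exact_mod_cast hj
        have hjx0 : (0:ℝ) < (j:ℝ) := by linarith
        rw [zero_add]
        have hcard : (((Finset.Icc 1 (2*j)).erase j).filter (fun k => 2*k ≤ j)).card ≤ 2*j := by
          calc _ ≤ ((Finset.Icc 1 (2*j)).erase j).card := Finset.card_filter_le _ _
            _ ≤ (Finset.Icc 1 (2*j)).card := Finset.card_erase_le
            _ = 2*j := by rw [Nat.card_Icc]; omega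
        have hptw : ∀ k ∈ ((Finset.Icc 1 (2*j)).erase j).filter (fun k => 2*k ≤ j),
            F j k ≤ Kl * (1 + (j:ℝ) ^ β) := by
          intro k hkmem
          simp only [Finset.mem_filter, Finset.mem_erase, Finset.mem_Icc] at hkmem
          have hk1 := hkmem.1.2.1
          have hkx : (1:ℝ) ≤ (k:ℝ) := by exact_mod_cast hk1
          have hkj : (k:ℝ) ≤ (j:ℝ) := by
            have : k ≤ j := by omega
            exact_mod_cast this
          have hkβ : (k:ℝ) ^ β ≤ 1 + (j:ℝ) ^ β := by
            rcases le_or_gt 0 β with hβ0 | hβ0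
            · have : (k:ℝ) ^ β ≤ (j:ℝ) ^ β := Real.rpow_le_rpow (by linarith) hkj hβ0
              linarith
            · have h1 : (k:ℝ) ^ β ≤ 1 :=
                Real.rpow_le_one_of_one_le_of_nonpos hkx hβ0.le
              have h2 : (0:ℝ) ≤ (j:ℝ) ^ β := Real.rpow_nonneg (by linarith) β
              linarith
          calc F j k ≤ Kl * (k:ℝ) ^ β := hlowterm j k hj hk1 hkmem.2
            _ ≤ Kl * (1 + (j:ℝ) ^ β) := mul_le_mul_of_nonneg_left hkβ hKl0.le
        calc ∑ k ∈ ((Finset.Icc 1 (2*j)).erase j).filter (fun k => 2*k ≤ j), F j k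
            ≤ _ • (Kl * (1 + (j:ℝ) ^ β)) := Finset.sum_le_card_nsmul _ _ _ hptw
          _ ≤ (2*j : ℕ) • (Kl * (1 + (j:ℝ) ^ β)) := by
              apply nsmul_le_nsmul_left (by positivity) hcard
          _ = (2*(j:ℝ)) * (Kl * (1 + (j:ℝ) ^ β)) := by
              rw [nsmul_eq_mul]
              push_cast
              ring
          _ ≤ 4 * Kl * (j:ℝ) ^ T := by
              have he1 : (j:ℝ) * (j:ℝ) ^ β = (j:ℝ) ^ (1 + β) := by
                rw [Real.rpow_add hjx0, Real.rpow_one]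
              have hjT1 : (j:ℝ) ≤ (j:ℝ) ^ T := by
                calc (j:ℝ) = (j:ℝ) ^ (1:ℝ) := (Real.rpow_one _).symm
                  _ ≤ (j:ℝ) ^ T := Real.rpow_le_rpow_of_exponent_le hjx
                      (by rw [hβT]; linarith)
              have hjT2 : (j:ℝ) ^ (1 + β) ≤ (j:ℝ) ^ T :=
                Real.rpow_le_rpow_of_exponent_le hjx (by rw [hβT]; linarith)
              have expand : (2*(j:ℝ)) * (Kl * (1 + (j:ℝ) ^ β))
                  = 2 * Kl * ((j:ℝ) + (j:ℝ) * (j:ℝ) ^ β) := by ring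
              rw [expand, he1]
              nlinarith [hjT1, hjT2, hKl0]
    -- far part
    have hF0 : ∀ j, F j 0 = 0 := by intro j; simp [hF]
    have hFjj : ∀ j, F j j = 0 := by intro j; simp [hF]
    have hfarterm : ∀ j k : ℕ, 1 ≤ j → 2*j < k →
        F j k ≤ ((c₀ ^ d)⁻¹ * (j:ℝ) ^ (α * (d:ℝ))) * p k ^ 2 := by
      intro j k hj h2j
      have hjx : (1:ℝ) ≤ (j:ℝ) := by exact_mod_cast hj
      have hjx0 : (0:ℝ) < (j:ℝ) := by linarith
      have hk1 : 1 ≤ k := by omega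
      have hne : k ≠ j := by omega
      have h2jx : 2 * (j:ℝ) ≤ (k:ℝ) := by
        have : 2*j ≤ k := by omega
        exact_mod_cast this
      have hgap : c₀ * (j:ℝ) ^ (-α) ≤ |θ j - θ k| := by
        rw [hθ j hj, hθ k hk1]
        calc c₀ * (j:ℝ) ^ (-α) ≤ (j:ℝ) ^ (-α) - (k:ℝ) ^ (-α) :=
              aux_gap_out (by linarith) hjx h2jx
          _ ≤ |(j:ℝ) ^ (-α) - (k:ℝ) ^ (-α)| := le_abs_self _
      have he : ((c₀ * (j:ℝ) ^ (-α)) ^ d)⁻¹ = (c₀ ^ d)⁻¹ * (j:ℝ) ^ (α * (d:ℝ)) := by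
        rw [aux_pow_inv hc₀ hjx0, show -(-α * (d:ℝ)) = α * (d:ℝ) by ring]
      calc F j k ≤ ((c₀ * (j:ℝ) ^ (-α)) ^ d)⁻¹ * p k ^ 2 :=
            hterm j k hk1 hne _ (by positivity) hgap
        _ = ((c₀ ^ d)⁻¹ * (j:ℝ) ^ (α * (d:ℝ))) * p k ^ 2 := by rw [he]
    have hclass : ∀ (j : ℕ),
        ∀ x : ↑(((((Finset.Icc 1 (2*j)).erase j) : Finset ℕ) : Set ℕ)ᶜ),
        (x:ℕ) = 0 ∨ (x:ℕ) = j ∨ 2*j < (x:ℕ) := by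
      intro j x
      have hmem := x.2
      simp only [Set.mem_compl_iff, Finset.coe_erase, Set.mem_diff, Finset.mem_coe,
        Finset.mem_Icc, Set.mem_singleton_iff, not_and, not_not] at hmem
      by_cases h0 : (x:ℕ) = 0
      · exact Or.inl h0
      · by_cases hj' : (x:ℕ) = j
        · exact Or.inr (Or.inl hj')
        · right; right
          rcases not_and_or.mp (fun hc => hj' (hmem hc)) with h | h <;> omega
    have hfar : ∃ B : ℝ, 0 ≤ B ∧ ∀ j : ℕ, 1 ≤ j →
        ∑' (x : ↑(((((Finset.Icc 1 (2*j)).erase j) : Finset ℕ) : Set ℕ)ᶜ)), F j ↑x ≤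
          B * (j:ℝ) ^ T := by
      rcases le_or_gt (2*π) 1 with hπa | hπa
      · -- 2π ≤ 1 : use summability of p²
        refine ⟨(c₀ ^ d)⁻¹ * S, by positivity, ?_⟩
        intro j hj
        have hjx : (1:ℝ) ≤ (j:ℝ) := by exact_mod_cast hj
        have hjx0 : (0:ℝ) < (j:ℝ) := by linarith
        set g : ℕ → ℝ := fun k => ((c₀ ^ d)⁻¹ * (j:ℝ) ^ (α * (d:ℝ))) * p k ^ 2 with hgdef
        have hgnn : ∀ k, 0 ≤ g k := by
          intro k; simp only [hgdef]; positivity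
        have hgsum : Summable g := hps.mul_left _
        have hmaj : ∀ x : ↑(((((Finset.Icc 1 (2*j)).erase j) : Finset ℕ) : Set ℕ)ᶜ),
            F j ↑x ≤ g ↑x := by
          intro x
          rcases hclass j x with h | h | h
          · rw [h, hF0]; exact hgnn 0
          · rw [h, hFjj]; exact hgnn j
          · exact hfarterm j _ hj h
        calc ∑' (x : ↑(((((Finset.Icc 1 (2*j)).erase j) : Finset ℕ) : Set ℕ)ᶜ)), F j ↑x
            ≤ ∑' (x : ↑(((((Finset.Icc 1 (2*j)).erase j) : Finset ℕ) : Set ℕ)ᶜ)), g ↑x :=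
              Summable.tsum_le_tsum hmaj ((hFsum j hj).subtype _) (hgsum.subtype _)
          _ ≤ ∑' k, g k := Summable.tsum_le_tsum_of_inj Subtype.val Subtype.val_injective
              (fun c _ => hgnn c) (fun b => le_rfl) (hgsum.subtype _) hgsum
          _ = ((c₀ ^ d)⁻¹ * (j:ℝ) ^ (α * (d:ℝ))) * S := tsum_mul_left
          _ ≤ ((c₀ ^ d)⁻¹ * S) * (j:ℝ) ^ T := by
              have hexp : (j:ℝ) ^ (α * (d:ℝ)) ≤ (j:ℝ) ^ T :=
                Real.rpow_le_rpow_of_exponent_le hjx (by rw [hTdef]; linarith)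
              calc ((c₀ ^ d)⁻¹ * (j:ℝ) ^ (α * (d:ℝ))) * S
                  = ((c₀ ^ d)⁻¹ * S) * (j:ℝ) ^ (α * (d:ℝ)) := by ring
                _ ≤ ((c₀ ^ d)⁻¹ * S) * (j:ℝ) ^ T :=
                    mul_le_mul_of_nonneg_left hexp (mul_nonneg hc₀d.le hS0)
      · rcases le_or_gt (2*π) (d:ℝ) with hπb | hπb
        · -- 1 < 2π ≤ d
          have hsumz : Summable (fun k : ℕ => (k:ℝ) ^ (-(2*π))) :=
            Real.summable_nat_rpow.2 (by linarith)
          set Z := ∑' k : ℕ, (k:ℝ) ^ (-(2*π)) with hZdef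
          have hZ0 : 0 ≤ Z := tsum_nonneg (fun k => Real.rpow_nonneg (Nat.cast_nonneg k) _)
          refine ⟨(c₀ ^ d)⁻¹ * C^2 * Z, by positivity, ?_⟩
          intro j hj
          have hjx : (1:ℝ) ≤ (j:ℝ) := by exact_mod_cast hj
          have hjx0 : (0:ℝ) < (j:ℝ) := by linarith
          set g : ℕ → ℝ := fun k =>
            ((c₀ ^ d)⁻¹ * C^2 * (j:ℝ) ^ (α * (d:ℝ))) * (k:ℝ) ^ (-(2*π)) with hgdef
          have hgnn : ∀ k, 0 ≤ g k := by
            intro k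
            simp only [hgdef]
            have := Real.rpow_nonneg (Nat.cast_nonneg k) (-(2*π))
            positivity
          have hgsum : Summable g := hsumz.mul_left _
          have hmaj : ∀ x : ↑(((((Finset.Icc 1 (2*j)).erase j) : Finset ℕ) : Set ℕ)ᶜ),
              F j ↑x ≤ g ↑x := by
            intro x
            rcases hclass j x with h | h | h
            · rw [h, hF0]; exact hgnn 0
            · rw [h, hFjj]; exact hgnn j
            · have hk1 : 1 ≤ (x:ℕ) := by omega
              calc F j ↑x ≤ ((c₀ ^ d)⁻¹ * (j:ℝ) ^ (α * (d:ℝ))) * p ↑x ^ 2 :=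
                    hfarterm j _ hj h
                _ ≤ ((c₀ ^ d)⁻¹ * (j:ℝ) ^ (α * (d:ℝ))) *
                    (C^2 * ((x:ℕ):ℝ) ^ (-(2*π))) :=
                    mul_le_mul_of_nonneg_left (pb _ hk1) (by positivity)
                _ = g ↑x := by simp only [hgdef]; ring
          calc ∑' (x : ↑(((((Finset.Icc 1 (2*j)).erase j) : Finset ℕ) : Set ℕ)ᶜ)), F j ↑x
              ≤ ∑' (x : ↑(((((Finset.Icc 1 (2*j)).erase j) : Finset ℕ) : Set ℕ)ᶜ)), g ↑x :=
                Summable.tsum_le_tsum hmaj ((hFsum j hj).subtype _) (hgsum.subtype _)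
            _ ≤ ∑' k, g k := Summable.tsum_le_tsum_of_inj Subtype.val Subtype.val_injective
                (fun c _ => hgnn c) (fun b => le_rfl) (hgsum.subtype _) hgsum
            _ = ((c₀ ^ d)⁻¹ * C^2 * (j:ℝ) ^ (α * (d:ℝ))) * Z := tsum_mul_left
            _ ≤ ((c₀ ^ d)⁻¹ * C^2 * Z) * (j:ℝ) ^ T := by
                have hexp : (j:ℝ) ^ (α * (d:ℝ)) ≤ (j:ℝ) ^ T :=
                  Real.rpow_le_rpow_of_exponent_le hjx (by rw [hTdef]; linarith)
                calc ((c₀ ^ d)⁻¹ * C^2 * (j:ℝ) ^ (α * (d:ℝ))) * Z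
                    = ((c₀ ^ d)⁻¹ * C^2 * Z) * (j:ℝ) ^ (α * (d:ℝ)) := by ring
                  _ ≤ ((c₀ ^ d)⁻¹ * C^2 * Z) * (j:ℝ) ^ T :=
                      mul_le_mul_of_nonneg_left hexp
                        (mul_nonneg (mul_nonneg hc₀d.le (sq_nonneg C)) hZ0)
        · -- 2π > d
          have hsumz : Summable (fun k : ℕ => (k:ℝ) ^ (-(2:ℝ))) :=
            Real.summable_nat_rpow.2 (by norm_num)
          set Z := ∑' k : ℕ, (k:ℝ) ^ (-(2:ℝ)) with hZdef
          have hZ0 : 0 ≤ Z := tsum_nonneg (fun k => Real.rpow_nonneg (Nat.cast_nonneg k) _)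
          refine ⟨(c₀ ^ d)⁻¹ * C^2 * 2 ^ (2 - 2*π) * Z, by positivity, ?_⟩
          intro j hj
          have hjx : (1:ℝ) ≤ (j:ℝ) := by exact_mod_cast hj
          have hjx0 : (0:ℝ) < (j:ℝ) := by linarith
          set g : ℕ → ℝ := fun k =>
            ((c₀ ^ d)⁻¹ * C^2 * 2 ^ (2 - 2*π) * (j:ℝ) ^ (α * (d:ℝ) + 2 - 2*π)) *
              (k:ℝ) ^ (-(2:ℝ)) with hgdef
          have hgnn : ∀ k, 0 ≤ g k := by
            intro k
            simp only [hgdef]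
            have := Real.rpow_nonneg (Nat.cast_nonneg k) (-(2:ℝ))
            positivity
          have hgsum : Summable g := hsumz.mul_left _
          have hmaj : ∀ x : ↑(((((Finset.Icc 1 (2*j)).erase j) : Finset ℕ) : Set ℕ)ᶜ),
              F j ↑x ≤ g ↑x := by
            intro x
            rcases hclass j x with h | h | h
            · rw [h, hF0]; exact hgnn 0
            · rw [h, hFjj]; exact hgnn j
            · have hk1 : 1 ≤ (x:ℕ) := by omega
              have hkx : (1:ℝ) ≤ ((x:ℕ):ℝ) := by exact_mod_cast hk1
              have hkx0 : (0:ℝ) < ((x:ℕ):ℝ) := by linarith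
              have h2jx : 2 * (j:ℝ) ≤ ((x:ℕ):ℝ) := by
                have : 2*j ≤ (x:ℕ) := by omega
                exact_mod_cast this
              have hsplit : ((x:ℕ):ℝ) ^ (-(2*π)) =
                  ((x:ℕ):ℝ) ^ (-(2:ℝ)) * ((x:ℕ):ℝ) ^ (2 - 2*π) := by
                rw [← Real.rpow_add hkx0]
                congr 1
                ring
              have hmono : ((x:ℕ):ℝ) ^ (2 - 2*π) ≤ (2 * (j:ℝ)) ^ (2 - 2*π) :=
                Real.rpow_le_rpow_of_nonpos (by linarith) h2jx (by linarith)
              have h2j : (2 * (j:ℝ)) ^ (2 - 2*π) = 2 ^ (2 - 2*π) * (j:ℝ) ^ (2 - 2*π) :=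
                Real.mul_rpow (by norm_num) hjx0.le
              have hcomb : (j:ℝ) ^ (α * (d:ℝ)) * (j:ℝ) ^ (2 - 2*π) =
                  (j:ℝ) ^ (α * (d:ℝ) + 2 - 2*π) := by
                rw [← Real.rpow_add hjx0]
                congr 1
                ring
              calc F j ↑x ≤ ((c₀ ^ d)⁻¹ * (j:ℝ) ^ (α * (d:ℝ))) * p ↑x ^ 2 :=
                    hfarterm j _ hj h
                _ ≤ ((c₀ ^ d)⁻¹ * (j:ℝ) ^ (α * (d:ℝ))) *
                    (C^2 * ((x:ℕ):ℝ) ^ (-(2*π))) :=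
                    mul_le_mul_of_nonneg_left (pb _ hk1) (by positivity)
                _ = ((c₀ ^ d)⁻¹ * C^2 * (j:ℝ) ^ (α * (d:ℝ)) * ((x:ℕ):ℝ) ^ (-(2:ℝ))) *
                    ((x:ℕ):ℝ) ^ (2 - 2*π) := by rw [hsplit]; ring
                _ ≤ ((c₀ ^ d)⁻¹ * C^2 * (j:ℝ) ^ (α * (d:ℝ)) * ((x:ℕ):ℝ) ^ (-(2:ℝ))) *
                    (2 ^ (2 - 2*π) * (j:ℝ) ^ (2 - 2*π)) := by
                    rw [← h2j]
                    apply mul_le_mul_of_nonneg_left hmono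
                    have h1 := Real.rpow_nonneg (by linarith : (0:ℝ) ≤ (j:ℝ)) (α * (d:ℝ))
                    have h2 := Real.rpow_nonneg (by linarith : (0:ℝ) ≤ ((x:ℕ):ℝ)) (-(2:ℝ))
                    positivity
                _ = g ↑x := by
                    simp only [hgdef]
                    rw [← hcomb]
                    ring
          calc ∑' (x : ↑(((((Finset.Icc 1 (2*j)).erase j) : Finset ℕ) : Set ℕ)ᶜ)), F j ↑x
              ≤ ∑' (x : ↑(((((Finset.Icc 1 (2*j)).erase j) : Finset ℕ) : Set ℕ)ᶜ)), g ↑x :=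
                Summable.tsum_le_tsum hmaj ((hFsum j hj).subtype _) (hgsum.subtype _)
            _ ≤ ∑' k, g k := Summable.tsum_le_tsum_of_inj Subtype.val Subtype.val_injective
                (fun c _ => hgnn c) (fun b => le_rfl) (hgsum.subtype _) hgsum
            _ = ((c₀ ^ d)⁻¹ * C^2 * 2 ^ (2 - 2*π) * (j:ℝ) ^ (α * (d:ℝ) + 2 - 2*π)) * Z :=
                tsum_mul_left
            _ ≤ ((c₀ ^ d)⁻¹ * C^2 * 2 ^ (2 - 2*π) * Z) * (j:ℝ) ^ T := by
                have hexp : (j:ℝ) ^ (α * (d:ℝ) + 2 - 2*π) ≤ (j:ℝ) ^ T :=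
                  Real.rpow_le_rpow_of_exponent_le hjx (by rw [hTdef]; linarith)
                have h2p : (0:ℝ) < (2:ℝ) ^ (2 - 2*π) := Real.rpow_pos_of_pos two_pos _
                calc ((c₀ ^ d)⁻¹ * C^2 * 2 ^ (2 - 2*π) * (j:ℝ) ^ (α * (d:ℝ) + 2 - 2*π)) * Z
                    = ((c₀ ^ d)⁻¹ * C^2 * 2 ^ (2 - 2*π) * Z) *
                        (j:ℝ) ^ (α * (d:ℝ) + 2 - 2*π) := by ring
                  _ ≤ ((c₀ ^ d)⁻¹ * C^2 * 2 ^ (2 - 2*π) * Z) * (j:ℝ) ^ T :=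
                      mul_le_mul_of_nonneg_left hexp
                        (mul_nonneg (mul_nonneg (mul_nonneg hc₀d.le (sq_nonneg C))
                          h2p.le) hZ0)
    -- assembly
    obtain ⟨Al, Bl, hAl, hBl, hlowb⟩ := hlow
    obtain ⟨Bf, hBf, hfarb⟩ := hfar
    have hKm0 : (0:ℝ) ≤ 4 * ((2:ℝ) ^ ((α+1) * (d:ℝ)) * 2 ^ (2*|π|) * C^2) := by positivity
    refine ⟨Al + Bl + 4 * ((2:ℝ) ^ ((α+1) * (d:ℝ)) * 2 ^ (2*|π|) * C^2) + Bf + 1,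
      by positivity, fun j hj => ?_⟩
    have hjx : (1:ℝ) ≤ (j:ℝ) := by exact_mod_cast hj
    have hjx0 : (0:ℝ) < (j:ℝ) := by linarith
    have hjT : (0:ℝ) < (j:ℝ) ^ T := Real.rpow_pos_of_pos hjx0 _
    show (∑' k, F j k) ≤ _
    rw [← (hFsum j hj).sum_add_tsum_compl (s := (Finset.Icc 1 (2*j)).erase j),
      ← Finset.sum_filter_add_sum_filter_not ((Finset.Icc 1 (2*j)).erase j)
        (fun k => 2*k ≤ j) (F j)]
    have h1 := hlowb j hj
    have h2 := hmid j hj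
    have h3 := hfarb j hj
    nlinarith [hjT, hAl, hBl, hBf, hKm0, mul_nonneg hAl hjT.le, mul_nonneg hBl hjT.le,
      mul_nonneg hBf hjT.le, mul_nonneg hKm0 hjT.le]

  · -- non-summable case: each series diverges, tsum = 0
    refine ⟨1, one_pos, fun j hj => ?_⟩
    have hjx : (1:ℝ) ≤ (j:ℝ) := by exact_mod_cast hj
    have hnotsum : ¬ Summable (F j) := by
      intro hsum
      apply hps
      have haux : Summable (fun k => if k ≤ j then p k ^ 2 else 0) := by
        apply summable_of_ne_finset_zero (s := Finset.range (j+1))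
        intro k hk
        simp only [Finset.mem_range, not_lt] at hk
        rw [if_neg (by omega)]
      apply Summable.of_nonneg_of_le (fun k => sq_nonneg _) _ (hsum.add haux)
      intro k
      by_cases hkj : k ≤ j
      · rw [if_pos hkj]
        have := hFnn j k
        linarith
      · rw [if_neg hkj]
        push_neg at hkj
        have hk1 : 1 ≤ k := by omega
        have hkx : (1:ℝ) ≤ (k:ℝ) := by exact_mod_cast hk1
        have hjk : (j:ℝ) < (k:ℝ) := by exact_mod_cast hkj
        have hθj : θ j = (j:ℝ) ^ (-α) := hθ j hj
        have hθk : θ k = (k:ℝ) ^ (-α) := hθ k hk1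
        have hx : 0 < θ j - θ k := by
          rw [hθj, hθk]
          have := Real.rpow_lt_rpow_of_neg (by linarith : (0:ℝ) < (j:ℝ)) hjk
            (by linarith : -α < 0)
          linarith
        have hx1 : θ j - θ k ≤ 1 := by
          have h1 : θ j ≤ 1 := by
            rw [hθj]
            exact Real.rpow_le_one_of_one_le_of_nonpos hjx (by linarith)
          have h2 : 0 < θ k := by
            rw [hθk]
            exact Real.rpow_pos_of_pos (by linarith) _
          linarith
        have hpowle : (θ j - θ k) ^ d ≤ 1 := pow_le_one₀ hx.le hx1
        have hpowpos : 0 < (θ j - θ k) ^ d := pow_pos hx d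
        have hinv : 1 ≤ ((θ j - θ k) ^ d)⁻¹ := (one_le_inv₀ hpowpos).mpr hpowle
        have : F j k = ((θ j - θ k) ^ d)⁻¹ * p k ^ 2 := by
          simp only [hF, if_pos (And.intro hk1 (by omega : k ≠ j))]
          rw [zpow_neg, zpow_natCast]
        rw [this]
        simpa using le_mul_of_one_le_left (sq_nonneg (p k)) hinv
    show (∑' k, F j k) ≤ _
    rw [tsum_eq_zero_of_not_summable hnotsum]
    have : (0:ℝ) ≤ (j:ℝ) ^ (α * d + d - 2 * π) := Real.rpow_nonneg (by positivity) _
    nlinarith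
end
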